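/- Consider a single externality class and separable, piecewise affine, continuous, strictly increasing edge cost functions c^λ_e(x_e) = a_{e,k}·x_e + b_{e,k} + g_e·λ for x_e ∈ [σ_{e,k}, σ_{e,k+1}). For λ ≥ 0 let x_e(λ) denote the unique equilibrium edge loads and φ_{i,v}(λ) the shortest s_i–v distance with respect to edge lengths c^λ_e(x_e(λ)). Define the active support S(λ) = {(i, e) : e = (v,w) ∈ E, c^λ_e(x_e(λ)) = φ_{i,w}(λ) − φ_{i,v}(λ)}, the active function parts ℓ(λ) ∈ {0,…,K}^E by x_e(λ) ∈ [σ_{e,ℓ(λ)_e}, σ_{e,ℓ(λ)_e+1}), and the edge state 𝒮(λ) = (S(λ), ℓ(λ)). Then for every edge state 𝒮 = (S, ℓ), the set Λ(𝒮) = {λ ≥ 0 : 𝒮(λ) = 𝒮} is convex. -/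

import Mathlib

open Finset

variable {V : Type*} [Fintype V] [DecidableEq V] {I : Type*} [Fintype I]

/-- `l` is (the vertex list of) a simple directed path from `a` to `b` using edges
from `Eset`. -/
def IsPath (Eset : Finset (V × V)) (a b : V) (l : List V) : Prop :=
  l.head? = some a ∧ l.getLast? = some b ∧ l.Nodup ∧ l.Chain' (fun u v => (u, v) ∈ Eset)

noncomputable instance pathFintype (Eset : Finset (V × V)) (a b : V) :
    Fintype {l : List V // IsPath Eset a b l} :=
  Fintype.ofInjective
    (fun p : {l : List V // IsPath Eset a b l} =>
      (⟨p.1, p.2.2.2.1⟩ : {l : List V // l.Nodup}))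
    (by intro p q h; apply Subtype.ext; simpa using h)

/-- The (directed) edges traversed by a path given as a vertex list. -/
def pathEdges (l : List V) : List (V × V) := l.zip l.tail

/-- A flow is feasible if it is nonnegative and satisfies all demands. -/
def Feasible {Eset : Finset (V × V)} {s t : I → V} (d : I → ℝ)
    (x : ∀ i, {l : List V // IsPath Eset (s i) (t i) l} → ℝ) : Prop :=
  (∀ i p, 0 ≤ x i p) ∧ ∀ i, ∑ p, x i p = d i

/-- The flow of commodity `i` on edge `e`: `x_{i,e} = ∑_{p ∋ e} x_{i,p}`. -/
noncomputable def commEdgeFlow {Eset : Finset (V × V)} {s t : I → V}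
    (x : ∀ i, {l : List V // IsPath Eset (s i) (t i) l} → ℝ) (i : I) (e : V × V) : ℝ :=
  ∑ p, if e ∈ pathEdges p.1 then x i p else 0

/-- The load of edge `e`: `x_e = ∑_i x_{i,e}`. -/
noncomputable def edgeLoad {Eset : Finset (V × V)} {s t : I → V}
    (x : ∀ i, {l : List V // IsPath Eset (s i) (t i) l} → ℝ) (e : V × V) : ℝ :=
  ∑ i, commEdgeFlow x i e

/-- The separable cost of a path: `c^λ_{i,p}(x) = ∑_{e∈p} c^λ_e(x_e)`. -/
noncomputable def pathCost {Eset : Finset (V × V)} {s t : I → V} (c : V × V → ℝ → ℝ)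
    (x : ∀ i, {l : List V // IsPath Eset (s i) (t i) l} → ℝ) (l : List V) : ℝ :=
  ((pathEdges l).map (fun e => c e (edgeLoad x e))).sum

/-- Wardrop equilibrium with respect to the separable edge costs `c`. -/
def IsWardrop {Eset : Finset (V × V)} {s t : I → V} (d : I → ℝ) (c : V × V → ℝ → ℝ)
    (x : ∀ i, {l : List V // IsPath Eset (s i) (t i) l} → ℝ) : Prop :=
  Feasible d x ∧
    ∀ i (p : {l : List V // IsPath Eset (s i) (t i) l}), 0 < x i p →
      ∀ q : {l : List V // IsPath Eset (s i) (t i) l},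
        pathCost c x p.1 ≤ pathCost c x q.1

/-- The cost of a path with respect to fixed edge loads. -/
def pathCostOfLoads (c : V × V → ℝ → ℝ) (load : V × V → ℝ) (l : List V) : ℝ :=
  ((pathEdges l).map (fun e => c e (load e))).sum

/-- The shortest-path distance from `a` to `v` with respect to the edge lengths
`e ↦ c_e(load_e)`, valued in `EReal` (`⊤` if `v` is not reachable from `a`). -/
noncomputable def shortestDist (Eset : Finset (V × V)) (c : V × V → ℝ → ℝ)
    (load : V × V → ℝ) (a v : V) : EReal :=
  sInf {r : EReal | ∃ l : List V, IsPath Eset a v l ∧ r = (pathCostOfLoads c load l : ℝ)}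

/-- The active support: pairs `(i, e)` with `e = (v,w) ∈ E` such that
`c_e(x_e) = φ_{i,w} − φ_{i,v}`, i.e. `e` lies on a shortest path for commodity `i`. -/
noncomputable def activeSupport (Eset : Finset (V × V)) (s : I → V)
    (c : V × V → ℝ → ℝ) (load : V × V → ℝ) : Set (I × (V × V)) :=
  {ie | ie.2 ∈ Eset ∧
    (c ie.2 (load ie.2) : EReal) =
      shortestDist Eset c load (s ie.1) ie.2.2 - shortestDist Eset c load (s ie.1) ie.2.1}

/-! ### Auxiliary lemmas on `pathEdges` and `IsPath` -/

lemma pathEdges_nil : pathEdges ([] : List V) = [] := rfl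

lemma pathEdges_single (x : V) : pathEdges [x] = [] := rfl

lemma pathEdges_cons₂ (x y : V) (l : List V) :
    pathEdges (x :: y :: l) = (x, y) :: pathEdges (y :: l) := rfl

lemma pathEdges_mem_Eset {Eset : Finset (V × V)} :
    ∀ {l : List V}, l.Chain' (fun u v => (u, v) ∈ Eset) → ∀ e ∈ pathEdges l, e ∈ Eset := by
  intro l
  induction l with
  | nil => intro _ e he; simp [pathEdges_nil] at he
  | cons x l ih =>
    cases l with
    | nil => intro _ e he; simp [pathEdges_single] at he
    | cons y r =>
      intro h e he
      rw [List.Chain', List.isChain_cons_cons] at h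
      rw [pathEdges_cons₂] at he
      rcases List.mem_cons.1 he with rfl | he
      · exact h.1
      · exact ih h.2 e he

lemma pathEdges_nodup {l : List V} (h : l.Nodup) : (pathEdges l).Nodup := by
  have hlen : l.tail.length ≤ l.length := by cases l <;> simp
  have hmap : (pathEdges l).map Prod.snd = l.tail := List.map_snd_zip hlen
  have ht : (pathEdges l).map Prod.snd |>.Nodup := by rw [hmap]; exact h.tail
  exact ht.of_map _

lemma pathEdges_concat : ∀ {l : List V} {u : V}, l.getLast? = some u → ∀ w : V,
    pathEdges (l ++ [w]) = pathEdges l ++ [(u, w)] := by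
  intro l
  induction l with
  | nil => intro u h; simp at h
  | cons x l ih =>
    cases l with
    | nil =>
      intro u h w
      simp only [List.getLast?_singleton, Option.some_inj] at h
      subst h; rfl
    | cons y r =>
      intro u h w
      have h' : (y :: r).getLast? = some u := by
        rw [List.getLast?_cons_cons] at h; exact h
      have h2 : pathEdges ((x :: y :: r) ++ [w]) = (x, y) :: pathEdges ((y :: r) ++ [w]) := rfl
      rw [h2, ih h' w, pathEdges_cons₂]; rfl

lemma pathEdges_prefix : ∀ {l₁ l₂ : List V}, l₁ <+: l₂ → pathEdges l₁ <+: pathEdges l₂ := by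
  intro l₁
  induction l₁ with
  | nil => intro l₂ _; exact ⟨pathEdges l₂, rfl⟩
  | cons x l ih =>
    intro l₂ hpre
    obtain ⟨r, rfl⟩ := hpre
    cases l with
    | nil => exact ⟨pathEdges (x :: r), rfl⟩
    | cons y l' =>
      have h2 : (x :: y :: l') ++ r = x :: ((y :: l') ++ r) := rfl
      rw [h2, pathEdges_cons₂]
      have h3 : (y :: l') ++ r = y :: (l' ++ r) := rfl
      rw [h3, pathEdges_cons₂]
      obtain ⟨rr, hrr⟩ := ih (l₂ := (y :: l') ++ r) ⟨r, rfl⟩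
      rw [h3] at hrr
      exact ⟨rr, by rw [List.cons_append, hrr]⟩

lemma isPath_singleton (Eset : Finset (V × V)) (a : V) : IsPath Eset a a [a] :=
  ⟨rfl, rfl, List.nodup_singleton a, List.isChain_singleton a⟩

lemma isPath_concat {Eset : Finset (V × V)} {a v w u : V} {l : List V}
    (h : IsPath Eset a v (l ++ [w])) (hl : l.getLast? = some u) :
    IsPath Eset a u l ∧ (u, w) ∈ Eset ∧ v = w := by
  obtain ⟨hh, hlast, hnd, hch⟩ := h
  have hlne : l ≠ [] := by rintro rfl; simp at hl
  have hvw : v = w := by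
    rw [List.getLast?_concat] at hlast; exact (Option.some_inj.1 hlast).symm
  rw [List.Chain', List.isChain_append] at hch
  obtain ⟨hch1, _, hR⟩ := hch
  have hhead : l.head? = some a := by
    cases l with
    | nil => exact absurd rfl hlne
    | cons x r => simpa using hh
  exact ⟨⟨hhead, hl, (List.sublist_append_left l [w]).nodup hnd, hch1⟩,
    hR u hl w rfl, hvw⟩

/-! ### Auxiliary lemmas on path costs -/

lemma pathCostOfLoads_concat {cc : V × V → ℝ → ℝ} {load : V × V → ℝ} {l : List V} {u : V}
    (h : l.getLast? = some u) (w : V) :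
    pathCostOfLoads cc load (l ++ [w]) =
      pathCostOfLoads cc load l + cc (u, w) (load (u, w)) := by
  unfold pathCostOfLoads
  rw [pathEdges_concat h w, List.map_append, List.sum_append]
  simp

lemma pathCostOfLoads_nonneg {Eset : Finset (V × V)} {cc : V × V → ℝ → ℝ} {load : V × V → ℝ}
    (hnn : ∀ e ∈ Eset, 0 ≤ cc e (load e)) {l : List V}
    (hch : l.Chain' (fun u v => (u, v) ∈ Eset)) :
    0 ≤ pathCostOfLoads cc load l := by
  apply List.sum_nonneg
  intro r hr
  rcases List.mem_map.1 hr with ⟨e, he, rfl⟩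
  exact hnn e (pathEdges_mem_Eset hch e he)

lemma pathCostOfLoads_prefix_le {Eset : Finset (V × V)} {cc : V × V → ℝ → ℝ} {load : V × V → ℝ}
    (hnn : ∀ e ∈ Eset, 0 ≤ cc e (load e)) {l₁ l₂ : List V} (hpre : l₁ <+: l₂)
    (hch : l₂.Chain' (fun u v => (u, v) ∈ Eset)) :
    pathCostOfLoads cc load l₁ ≤ pathCostOfLoads cc load l₂ := by
  obtain ⟨E2, hE⟩ := pathEdges_prefix hpre
  unfold pathCostOfLoads
  rw [← hE, List.map_append, List.sum_append]
  have h0 : 0 ≤ (E2.map fun e => cc e (load e)).sum := by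
    apply List.sum_nonneg
    rintro r hr
    rcases List.mem_map.1 hr with ⟨e, he, rfl⟩
    refine hnn e (pathEdges_mem_Eset hch e ?_)
    rw [← hE]; exact List.mem_append_right _ he
  linarith

lemma list_sum_interp (u v : ℝ) (f g h : V × V → ℝ) :
    ∀ L : List (V × V), (∀ e ∈ L, f e = u * g e + v * h e) →
      (L.map f).sum = u * (L.map g).sum + v * (L.map h).sum
  | [], _ => by simp
  | e :: L, hL => by
    simp only [List.map_cons, List.sum_cons]
    rw [hL e (by simp), list_sum_interp u v f g h L (fun e' he' => hL e' (by simp [he']))]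
    ring
set_option linter.unusedSectionVars false

/-! ### Auxiliary lemmas on `shortestDist` -/

lemma shortestDist_le {Eset : Finset (V × V)} {cc : V × V → ℝ → ℝ} {load : V × V → ℝ}
    {av z : V} {l : List V} (h : IsPath Eset av z l) :
    shortestDist Eset cc load av z ≤ ((pathCostOfLoads cc load l : ℝ) : EReal) :=
  sInf_le ⟨l, h, rfl⟩

lemma shortestDist_nonneg {Eset : Finset (V × V)} {cc : V × V → ℝ → ℝ} {load : V × V → ℝ}
    (hnn : ∀ e ∈ Eset, 0 ≤ cc e (load e)) (av z : V) :
    0 ≤ shortestDist Eset cc load av z := by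
  apply le_sInf
  rintro r ⟨l, hl, rfl⟩
  exact_mod_cast pathCostOfLoads_nonneg hnn hl.2.2.2

lemma shortestDist_self {Eset : Finset (V × V)} {cc : V × V → ℝ → ℝ} {load : V × V → ℝ}
    (hnn : ∀ e ∈ Eset, 0 ≤ cc e (load e)) (av : V) :
    shortestDist Eset cc load av av = 0 := by
  refine le_antisymm ?_ (shortestDist_nonneg hnn av av)
  have h := shortestDist_le (cc := cc) (load := load) (isPath_singleton Eset av)
  have h0 : pathCostOfLoads cc load [av] = 0 := rfl
  rw [h0] at h
  exact_mod_cast h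

lemma shortestDist_ne_top_of_path {Eset : Finset (V × V)} {cc : V × V → ℝ → ℝ}
    {load : V × V → ℝ} {av z : V} {l : List V} (h : IsPath Eset av z l) :
    shortestDist Eset cc load av z ≠ ⊤ := by
  intro ht
  have h2 := shortestDist_le (cc := cc) (load := load) h
  rw [ht] at h2
  exact absurd (top_le_iff.1 h2) (EReal.coe_ne_top _)

lemma shortestDist_exists {Eset : Finset (V × V)} {cc : V × V → ℝ → ℝ} {load : V × V → ℝ}
    {av z : V} (hne : shortestDist Eset cc load av z ≠ ⊤) :
    ∃ l, IsPath Eset av z l ∧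
      shortestDist Eset cc load av z = ((pathCostOfLoads cc load l : ℝ) : EReal) := by
  classical
  set Sset := {r : EReal | ∃ l, IsPath Eset av z l ∧ r = ((pathCostOfLoads cc load l : ℝ) : EReal)}
    with hSset
  have hdef : shortestDist Eset cc load av z = sInf Sset := rfl
  have hfin : Sset.Finite := by
    have hsub : Sset ⊆ Set.range (fun p : {l : List V // IsPath Eset av z l} =>
        ((pathCostOfLoads cc load p.1 : ℝ) : EReal)) := by
      rintro r ⟨l, hl, rfl⟩; exact ⟨⟨l, hl⟩, rfl⟩
    exact (Set.finite_range _).subset hsub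
  have hne' : Sset.Nonempty := by
    by_contra hemp
    rw [Set.not_nonempty_iff_eq_empty] at hemp
    apply hne
    rw [hdef, hemp, sInf_empty]
  have hmem := hne'.csInf_mem hfin
  rw [← hdef] at hmem
  exact hmem

/-! ### EReal helpers -/

lemma EReal_sub_real {x y : EReal} {cr : ℝ} (hx : 0 ≤ x) (hy : 0 ≤ y)
    (h : (cr : EReal) = y - x) :
    ∃ rx ry : ℝ, x = (rx : EReal) ∧ y = (ry : EReal) ∧ cr = ry - rx := by
  induction x using EReal.rec with
  | bot => exact absurd hx (by simp)
  | top =>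
    rw [EReal.sub_top] at h
    exact absurd h (by simp)
  | coe rx =>
    induction y using EReal.rec with
    | bot => exact absurd hy (by simp)
    | top => rw [EReal.top_sub_coe] at h; exact absurd h (by simp)
    | coe ry =>
      rw [← EReal.coe_sub] at h
      exact ⟨rx, ry, rfl, rfl, by exact_mod_cast h⟩

/-! ### Triangle inequality for `shortestDist` -/

lemma shortestDist_triangle {Eset : Finset (V × V)} {cc : V × V → ℝ → ℝ} {load : V × V → ℝ}
    (hnn : ∀ e ∈ Eset, 0 ≤ cc e (load e)) {av z w : V} (he : (z, w) ∈ Eset) :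
    shortestDist Eset cc load av w ≤
      shortestDist Eset cc load av z + ((cc (z, w) (load (z, w)) : ℝ) : EReal) := by
  by_cases htop : shortestDist Eset cc load av z = ⊤
  · rw [htop, EReal.top_add_of_ne_bot (EReal.coe_ne_bot _)]; exact le_top
  obtain ⟨l, hl, hval⟩ := shortestDist_exists htop
  rw [hval, ← EReal.coe_add]
  have hcnn : 0 ≤ cc (z, w) (load (z, w)) := hnn _ he
  by_cases hwmem : w ∈ l
  · obtain ⟨l₁, l₂, rfl⟩ := List.append_of_mem hwmem
    have hpre : (l₁ ++ [w]) <+: (l₁ ++ w :: l₂) := ⟨l₂, by simp⟩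
    obtain ⟨hh, hlast, hnd, hch⟩ := hl
    have hpath' : IsPath Eset av w (l₁ ++ [w]) := by
      refine ⟨?_, List.getLast?_concat, hpre.sublist.nodup hnd, hch.prefix hpre⟩
      cases l₁ with
      | nil => simpa using hh
      | cons x r => simpa using hh
    have hcost : pathCostOfLoads cc load (l₁ ++ [w]) ≤ pathCostOfLoads cc load (l₁ ++ w :: l₂) :=
      pathCostOfLoads_prefix_le hnn hpre hch
    calc shortestDist Eset cc load av w
        ≤ ((pathCostOfLoads cc load (l₁ ++ [w]) : ℝ) : EReal) := shortestDist_le hpath'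
      _ ≤ ((pathCostOfLoads cc load (l₁ ++ w :: l₂) + cc (z, w) (load (z, w)) : ℝ) : EReal) := by
          exact_mod_cast by linarith
  · have hlast : l.getLast? = some z := hl.2.1
    have hlne : l ≠ [] := by rintro rfl; simp at hlast
    have hpath' : IsPath Eset av w (l ++ [w]) := by
      obtain ⟨hh, hlast', hnd, hch⟩ := hl
      refine ⟨?_, List.getLast?_concat, ?_, ?_⟩
      · cases l with
        | nil => exact absurd rfl hlne
        | cons x r => simpa using hh
      · rw [List.nodup_append]
        exact ⟨hnd, List.nodup_singleton w, by simpa using fun a (ha : a ∈ l) (h : a = w) => hwmem (h ▸ ha)⟩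
      · rw [List.Chain', List.isChain_append]
        refine ⟨hch, List.isChain_singleton w, ?_⟩
        intro x hx y hy
        simp only [List.head?_cons, Option.mem_def, Option.some_inj] at hy
        rw [hlast'] at hx
        simp only [Option.mem_def, Option.some_inj] at hx
        subst hx; subst hy; exact he
    have hceq := pathCostOfLoads_concat (cc := cc) (load := load) hlast w
    have := shortestDist_le (cc := cc) (load := load) hpath'
    rw [hceq] at this
    exact this
/-! ### Tightness along shortest paths -/

lemma edges_tight {Eset : Finset (V × V)} {cc : V × V → ℝ → ℝ} {load : V × V → ℝ}
    (hnn : ∀ e ∈ Eset, 0 ≤ cc e (load e)) (av : V) :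
    ∀ (l : List V) (z : V), IsPath Eset av z l →
      shortestDist Eset cc load av z = ((pathCostOfLoads cc load l : ℝ) : EReal) →
      ∀ e ∈ pathEdges l,
        ((cc e (load e) : ℝ) : EReal) =
          shortestDist Eset cc load av e.2 - shortestDist Eset cc load av e.1 := by
  intro l
  induction l using List.reverseRecOn with
  | nil => intro z h hval e he; simp [pathEdges_nil] at he
  | append_singleton l w ih =>
    intro z h hval e he
    cases hl : l.getLast? with
    | none =>
      rw [List.getLast?_eq_none_iff] at hl
      subst hl
      simp only [List.nil_append] at he
      simp [pathEdges_single] at he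
    | some u =>
      obtain ⟨hp', heEset, rfl⟩ := isPath_concat h hl
      have hlast := pathCostOfLoads_concat (cc := cc) (load := load) hl z
      set cuw := cc (u, z) (load (u, z)) with hcuw
      have hdu_le : shortestDist Eset cc load av u ≤
          ((pathCostOfLoads cc load l : ℝ) : EReal) := shortestDist_le hp'
      have hdu_nn : 0 ≤ shortestDist Eset cc load av u := shortestDist_nonneg hnn av u
      have hdu_ne_bot : shortestDist Eset cc load av u ≠ ⊥ := by
        intro hbot; rw [hbot] at hdu_nn; simp at hdu_nn
      have hdu_ne_top : shortestDist Eset cc load av u ≠ ⊤ := shortestDist_ne_top_of_path hp'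
      set rdu := (shortestDist Eset cc load av u).toReal with hrdu
      have hdu : shortestDist Eset cc load av u = (rdu : EReal) :=
        (EReal.coe_toReal hdu_ne_top hdu_ne_bot).symm
      have htri := shortestDist_triangle hnn (av := av) heEset
      rw [hval, hdu, ← EReal.coe_add] at htri
      have htri' : pathCostOfLoads cc load (l ++ [z]) ≤ rdu + cuw := by exact_mod_cast htri
      have h2 : rdu ≤ pathCostOfLoads cc load l := by
        rw [hdu] at hdu_le; exact_mod_cast hdu_le
      have hdu_eq : rdu = pathCostOfLoads cc load l := by
        rw [hlast] at htri'; linarith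
      have hw_tight : (cuw : EReal) =
          shortestDist Eset cc load av z - shortestDist Eset cc load av u := by
        rw [hval, hdu, hdu_eq, hlast, ← EReal.coe_sub]
        norm_num
      rw [pathEdges_concat hl z] at he
      rcases List.mem_append.1 he with he | he
      · exact ih u hp' (by rw [hdu, hdu_eq]) e he
      · simp only [List.mem_singleton] at he
        subst he
        exact hw_tight

lemma cost_eq_dist_of_tight {Eset : Finset (V × V)} {cc : V × V → ℝ → ℝ} {load : V × V → ℝ}
    (hnn : ∀ e ∈ Eset, 0 ≤ cc e (load e)) (av : V) :
    ∀ (l : List V) (z : V), IsPath Eset av z l →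
      (∀ e ∈ pathEdges l,
        ((cc e (load e) : ℝ) : EReal) =
          shortestDist Eset cc load av e.2 - shortestDist Eset cc load av e.1) →
      ((pathCostOfLoads cc load l : ℝ) : EReal) = shortestDist Eset cc load av z := by
  intro l
  induction l using List.reverseRecOn with
  | nil => intro z h _; exact absurd h.1 (by simp)
  | append_singleton l w ih =>
    intro z h htight
    cases hl : l.getLast? with
    | none =>
      rw [List.getLast?_eq_none_iff] at hl
      subst hl
      simp only [List.nil_append] at h ⊢
      have hw_av : w = av := by
        have := h.1; simp only [List.head?_cons, Option.some_inj] at this; exact this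
      have hw_z : w = z := by
        have := h.2.1; simp only [List.getLast?_singleton, Option.some_inj] at this; exact this
      have h0 : pathCostOfLoads cc load [w] = 0 := rfl
      rw [h0, ← hw_z, ← hw_av, shortestDist_self hnn w]
      norm_num
    | some u =>
      obtain ⟨hp', heEset, rfl⟩ := isPath_concat h hl
      have hlast := pathCostOfLoads_concat (cc := cc) (load := load) hl z
      have hihval : ((pathCostOfLoads cc load l : ℝ) : EReal) =
          shortestDist Eset cc load av u := by
        refine ih u hp' ?_
        intro e he
        refine htight e ?_
        rw [pathEdges_concat hl z]
        exact List.mem_append_left _ he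
      have htw := htight (u, z) (by rw [pathEdges_concat hl z]; exact List.mem_append_right _ (by simp))
      have hdw_nn : 0 ≤ shortestDist Eset cc load av z := shortestDist_nonneg hnn av z
      have hdu_nn : 0 ≤ shortestDist Eset cc load av u := shortestDist_nonneg hnn av u
      obtain ⟨ru, rw', hu, hw, hc⟩ := EReal_sub_real hdu_nn hdw_nn htw
      have hclru : pathCostOfLoads cc load l = ru := by
        rw [hu] at hihval; exact_mod_cast hihval
      rw [hlast, hw, hclru, hc]
      exact EReal.coe_eq_coe_iff.2 (by ring)
/-! ### Flow lemmas and uniqueness of equilibrium loads -/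

lemma edgeLoad_nonneg {Eset : Finset (V × V)} {s t : I → V}
    {x : ∀ i, {l : List V // IsPath Eset (s i) (t i) l} → ℝ}
    (hx : ∀ i p, 0 ≤ x i p) (e : V × V) : 0 ≤ edgeLoad x e := by
  apply Finset.sum_nonneg
  intro i _
  apply Finset.sum_nonneg
  intro p _
  by_cases h : e ∈ pathEdges p.1 <;> simp [h, hx i p]

lemma edgeLoad_comb {Eset : Finset (V × V)} {s t : I → V} (u v : ℝ)
    (x y : ∀ i, {l : List V // IsPath Eset (s i) (t i) l} → ℝ) (e : V × V) :
    edgeLoad (fun i p => u * x i p + v * y i p) e = u * edgeLoad x e + v * edgeLoad y e := by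
  unfold edgeLoad commEdgeFlow
  rw [Finset.mul_sum, Finset.mul_sum, ← Finset.sum_add_distrib]
  refine Finset.sum_congr rfl fun i _ => ?_
  rw [Finset.mul_sum, Finset.mul_sum, ← Finset.sum_add_distrib]
  refine Finset.sum_congr rfl fun p _ => ?_
  by_cases h : e ∈ pathEdges p.1 <;> simp [h]

lemma sum_ite_pathEdges (f : V × V → ℝ) {L : List (V × V)} (h : L.Nodup) :
    ∑ e : V × V, (if e ∈ L then f e else 0) = (L.map f).sum := by
  classical
  rw [← Finset.sum_filter]
  have huniv : Finset.univ.filter (· ∈ L) = L.toFinset := by ext e; simp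
  rw [huniv, List.sum_toFinset f h]

lemma sum_pathCost_eq {Eset : Finset (V × V)} {s t : I → V} (cc : V × V → ℝ → ℝ)
    (load : V × V → ℝ) (z : ∀ i, {l : List V // IsPath Eset (s i) (t i) l} → ℝ) :
    ∑ i, ∑ p, pathCostOfLoads cc load p.1 * z i p
      = ∑ e : V × V, cc e (load e) * edgeLoad z e := by
  classical
  have hpc : ∀ (i : I) (p : {l : List V // IsPath Eset (s i) (t i) l}),
      pathCostOfLoads cc load p.1
        = ∑ e : V × V, (if e ∈ pathEdges p.1 then cc e (load e) else 0) := by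
    intro i p
    rw [sum_ite_pathEdges _ (pathEdges_nodup p.2.2.2.1)]
    rfl
  calc ∑ i, ∑ p, pathCostOfLoads cc load p.1 * z i p
      = ∑ i, ∑ p, ∑ e : V × V,
          (if e ∈ pathEdges p.1 then cc e (load e) else 0) * z i p := by
        refine Finset.sum_congr rfl fun i _ => Finset.sum_congr rfl fun p _ => ?_
        rw [hpc i p, Finset.sum_mul]
    _ = ∑ e : V × V, ∑ i, ∑ p,
          (if e ∈ pathEdges p.1 then cc e (load e) else 0) * z i p := by
        rw [Finset.sum_comm]
        refine Finset.sum_congr rfl fun e _ => ?_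
        rw [Finset.sum_comm]
    _ = ∑ e : V × V, cc e (load e) * edgeLoad z e := by
        refine Finset.sum_congr rfl fun e _ => ?_
        unfold edgeLoad commEdgeFlow
        rw [Finset.mul_sum]
        refine Finset.sum_congr rfl fun i _ => ?_
        rw [Finset.mul_sum]
        refine Finset.sum_congr rfl fun p _ => ?_
        by_cases h : e ∈ pathEdges p.1 <;> simp [h]

lemma wardrop_vi {Eset : Finset (V × V)} {s t : I → V} {d : I → ℝ} (hd : ∀ i, 0 < d i)
    (cc : V × V → ℝ → ℝ)
    {x z : ∀ i, {l : List V // IsPath Eset (s i) (t i) l} → ℝ}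
    (hx : IsWardrop d cc x) (hz : Feasible d z) :
    ∑ e : V × V, cc e (edgeLoad x e) * edgeLoad x e
      ≤ ∑ e : V × V, cc e (edgeLoad x e) * edgeLoad z e := by
  rw [← sum_pathCost_eq, ← sum_pathCost_eq]
  apply Finset.sum_le_sum
  intro i _
  obtain ⟨⟨hxnn, hxd⟩, hopt⟩ := hx
  have hex : ∃ p, 0 < x i p := by
    by_contra hno
    push_neg at hno
    have hz0 : ∀ p ∈ Finset.univ, x i p = 0 := fun p _ => le_antisymm (hno p) (hxnn i p)
    have := Finset.sum_eq_zero hz0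
    rw [hxd i] at this
    exact absurd this (ne_of_gt (hd i))
  obtain ⟨p0, hp0⟩ := hex
  have hopt' : ∀ p : {l : List V // IsPath Eset (s i) (t i) l}, 0 < x i p →
      ∀ q : {l : List V // IsPath Eset (s i) (t i) l},
        pathCostOfLoads cc (edgeLoad x) p.1 ≤ pathCostOfLoads cc (edgeLoad x) q.1 :=
    fun p hp q => hopt i p hp q
  have hmin : ∀ q : {l : List V // IsPath Eset (s i) (t i) l},
      pathCostOfLoads cc (edgeLoad x) p0.1 ≤ pathCostOfLoads cc (edgeLoad x) q.1 :=
    fun q => hopt' p0 hp0 q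
  have h1 : ∑ p, pathCostOfLoads cc (edgeLoad x) p.1 * x i p
      = pathCostOfLoads cc (edgeLoad x) p0.1 * d i := by
    rw [← hxd i, Finset.mul_sum]
    apply Finset.sum_congr rfl
    intro p _
    rcases eq_or_lt_of_le (hxnn i p) with h0 | hpos
    · rw [← h0]; ring
    · rw [le_antisymm (hopt' p hpos p0) (hmin p)]
  have h2 : pathCostOfLoads cc (edgeLoad x) p0.1 * d i
      ≤ ∑ p, pathCostOfLoads cc (edgeLoad x) p.1 * z i p := by
    rw [← hz.2 i, Finset.mul_sum]
    apply Finset.sum_le_sum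
    intro p _
    exact mul_le_mul_of_nonneg_right (hmin p) (hz.1 i p)
  rw [h1]
  exact h2

lemma wardrop_loads_unique {Eset : Finset (V × V)} {s t : I → V} {d : I → ℝ}
    (hd : ∀ i, 0 < d i) (cc : V × V → ℝ → ℝ)
    (hmono : ∀ e, StrictMonoOn (cc e) (Set.Ici (0 : ℝ)))
    {x y : ∀ i, {l : List V // IsPath Eset (s i) (t i) l} → ℝ}
    (hx : IsWardrop d cc x) (hy : IsWardrop d cc y) (e : V × V) :
    edgeLoad x e = edgeLoad y e := by
  have h1 := wardrop_vi hd cc hx hy.1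
  have h2 := wardrop_vi hd cc hy hx.1
  have hXnn : ∀ e, 0 ≤ edgeLoad x e := edgeLoad_nonneg hx.1.1
  have hYnn : ∀ e, 0 ≤ edgeLoad y e := edgeLoad_nonneg hy.1.1
  have hterm : ∀ e' : V × V,
      0 ≤ (cc e' (edgeLoad x e') - cc e' (edgeLoad y e')) * (edgeLoad x e' - edgeLoad y e') := by
    intro e'
    rcases lt_trichotomy (edgeLoad x e') (edgeLoad y e') with h | h | h
    · have := hmono e' (Set.mem_Ici.2 (hXnn e')) (Set.mem_Ici.2 (hYnn e')) h
      nlinarith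
    · rw [h]; simp
    · have := hmono e' (Set.mem_Ici.2 (hYnn e')) (Set.mem_Ici.2 (hXnn e')) h
      nlinarith
  have hsum : ∑ e' : V × V,
      (cc e' (edgeLoad x e') - cc e' (edgeLoad y e')) * (edgeLoad x e' - edgeLoad y e') ≤ 0 := by
    have hexp : ∑ e' : V × V,
        (cc e' (edgeLoad x e') - cc e' (edgeLoad y e')) * (edgeLoad x e' - edgeLoad y e')
        = (∑ e' : V × V, cc e' (edgeLoad x e') * edgeLoad x e'
            - ∑ e' : V × V, cc e' (edgeLoad x e') * edgeLoad y e')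
          + (∑ e' : V × V, cc e' (edgeLoad y e') * edgeLoad y e'
            - ∑ e' : V × V, cc e' (edgeLoad y e') * edgeLoad x e') := by
      rw [← Finset.sum_sub_distrib, ← Finset.sum_sub_distrib, ← Finset.sum_add_distrib]
      apply Finset.sum_congr rfl
      intros; ring
    rw [hexp]
    linarith
  have hall := (Finset.sum_eq_zero_iff_of_nonneg (fun e' _ => hterm e')).1
    (le_antisymm hsum (Finset.sum_nonneg fun e' _ => hterm e'))
  by_contra hne
  rcases lt_or_gt_of_ne hne with h | h
  · have hlt := hmono e (Set.mem_Ici.2 (hXnn e)) (Set.mem_Ici.2 (hYnn e)) h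
    have h0 := hall e (Finset.mem_univ e)
    nlinarith
  · have hlt := hmono e (Set.mem_Ici.2 (hYnn e)) (Set.mem_Ici.2 (hXnn e)) h
    have h0 := hall e (Finset.mem_univ e)
    nlinarith
lemma used_path_shortest_other {Eset : Finset (V × V)} {s t : I → V} {d : I → ℝ}
    {ca cb : V × V → ℝ → ℝ} {la lb : V × V → ℝ}
    (hnna : ∀ e ∈ Eset, 0 ≤ ca e (la e)) (hnnb : ∀ e ∈ Eset, 0 ≤ cb e (lb e))
    (hAB : activeSupport Eset s ca la = activeSupport Eset s cb lb)
    {x : ∀ i, {l : List V // IsPath Eset (s i) (t i) l} → ℝ}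
    (hwa : IsWardrop d ca x) (hla : edgeLoad x = la)
    (i : I) (p : {l : List V // IsPath Eset (s i) (t i) l}) (hp : 0 < x i p)
    (q : {l : List V // IsPath Eset (s i) (t i) l}) :
    pathCostOfLoads cb lb p.1 ≤ pathCostOfLoads cb lb q.1 := by
  have hopt : ∀ r : {l : List V // IsPath Eset (s i) (t i) l},
      pathCostOfLoads ca la p.1 ≤ pathCostOfLoads ca la r.1 := by
    intro r
    have h := hwa.2 i p hp r
    rw [show pathCost ca x p.1 = pathCostOfLoads ca (edgeLoad x) p.1 from rfl,
        show pathCost ca x r.1 = pathCostOfLoads ca (edgeLoad x) r.1 from rfl, hla] at h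
    exact h
  have hne : shortestDist Eset ca la (s i) (t i) ≠ ⊤ := shortestDist_ne_top_of_path p.2
  obtain ⟨q0, hq0, hq0val⟩ := shortestDist_exists hne
  have hvala : shortestDist Eset ca la (s i) (t i)
      = ((pathCostOfLoads ca la p.1 : ℝ) : EReal) := by
    refine le_antisymm (shortestDist_le p.2) ?_
    rw [hq0val]
    exact_mod_cast hopt ⟨q0, hq0⟩
  have htighta := edges_tight hnna (s i) p.1 (t i) p.2 hvala
  have htightb : ∀ e ∈ pathEdges p.1,
      ((cb e (lb e) : ℝ) : EReal)
        = shortestDist Eset cb lb (s i) e.2 - shortestDist Eset cb lb (s i) e.1 := by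
    intro e he
    have hmem : (i, e) ∈ activeSupport Eset s ca la :=
      ⟨pathEdges_mem_Eset p.2.2.2.2 e he, htighta e he⟩
    rw [hAB] at hmem
    exact hmem.2
  have hvalb := cost_eq_dist_of_tight hnnb (s i) p.1 (t i) p.2 htightb
  have hle := shortestDist_le (cc := cb) (load := lb) q.2
  rw [← hvalb] at hle
  exact_mod_cast hle
/-- for a single externality class and separable, piecewise affine,
continuous, strictly increasing edge cost functions, for every edge state
`𝒮 = (S, ℓ)` the set `Λ(𝒮)` of prices `λ ≥ 0` whose (unique) equilibrium edge loads
induce the active support `S` and the active function parts `ℓ` is convex. -/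
theorem active_state_set_convex
    (Eset : Finset (V × V)) (s t : I → V) (d : I → ℝ) (hd : ∀ i, 0 < d i)
    (hpaths : ∀ i, Nonempty {l : List V // IsPath Eset (s i) (t i) l})
    (K : ℕ) (σ : V × V → ℕ → ℝ) (a b : V × V → ℕ → ℝ) (ge : V × V → ℝ)
    (hσ0 : ∀ e, σ e 0 = 0) (hσmono : ∀ e, ∀ k < K, σ e k < σ e (k + 1))
    (ha : ∀ e, ∀ k ≤ K, 0 < a e k) (hb : ∀ e, ∀ k ≤ K, 0 ≤ b e k)
    (hge : ∀ e, 0 ≤ ge e)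
    (c : ℝ → V × V → ℝ → ℝ)
    (hc : ∀ lam e k r, k ≤ K → σ e k ≤ r → (k < K → r < σ e (k + 1)) →
      c lam e r = a e k * r + b e k + ge e * lam)
    (hccont : ∀ lam e, ContinuousOn (c lam e) (Set.Ici 0))
    (hcmono : ∀ lam e, StrictMonoOn (c lam e) (Set.Ici 0))
    -- the (unique) equilibrium edge loads `λ ↦ x_e(λ)`:
    (xload : ℝ → V × V → ℝ)
    (hxload : ∀ lam, 0 ≤ lam →
      ∃ x : ∀ i, {l : List V // IsPath Eset (s i) (t i) l} → ℝ,
        IsWardrop d (c lam) x ∧ ∀ e, edgeLoad x e = xload lam e)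
    -- an arbitrary edge state `𝒮 = (S, ℓ)`:
    (S : Set (I × (V × V))) (ℓ : V × V → ℕ) :
    Convex ℝ {lam : ℝ | 0 ≤ lam ∧
      activeSupport Eset s (c lam) (xload lam) = S ∧
      ∀ e ∈ Eset, ℓ e ≤ K ∧ σ e (ℓ e) ≤ xload lam e ∧
        (ℓ e < K → xload lam e < σ e (ℓ e + 1))} := by
  rintro lam1 ⟨hlam1nn, hS1, hℓ1⟩ lam2 ⟨hlam2nn, hS2, hℓ2⟩ u v hu hv huv
  rcases eq_or_lt_of_le hu with h0u | hu'
  · have hv1 : v = 1 := by linarith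
    simp only [smul_eq_mul, ← h0u, hv1, zero_mul, one_mul, zero_add]
    exact ⟨hlam2nn, hS2, hℓ2⟩
  rcases eq_or_lt_of_le hv with h0v | hv'
  · have hu1 : u = 1 := by linarith
    simp only [smul_eq_mul, ← h0v, hu1, zero_mul, one_mul, add_zero]
    exact ⟨hlam1nn, hS1, hℓ1⟩
  simp only [smul_eq_mul, Set.mem_setOf_eq]
  set lam := u * lam1 + v * lam2 with hlamdef
  have hlamnn : 0 ≤ lam :=
    add_nonneg (mul_nonneg hu'.le hlam1nn) (mul_nonneg hv'.le hlam2nn)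
  obtain ⟨x1, hw1, hload1⟩ := hxload lam1 hlam1nn
  obtain ⟨x2, hw2, hload2⟩ := hxload lam2 hlam2nn
  obtain ⟨xstar, hwstar, hloadstar⟩ := hxload lam hlamnn
  have hfun1 : edgeLoad x1 = xload lam1 := funext hload1
  have hfun2 : edgeLoad x2 = xload lam2 := funext hload2
  set xm : V × V → ℝ := fun e => u * xload lam1 e + v * xload lam2 e with hxmdef
  have hx1nn : ∀ e, 0 ≤ xload lam1 e := fun e => hload1 e ▸ edgeLoad_nonneg hw1.1.1 e
  have hx2nn : ∀ e, 0 ≤ xload lam2 e := fun e => hload2 e ▸ edgeLoad_nonneg hw2.1.1 e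
  have hcf1 : ∀ e ∈ Eset, c lam1 e (xload lam1 e)
      = a e (ℓ e) * xload lam1 e + b e (ℓ e) + ge e * lam1 := by
    intro e he
    obtain ⟨hK, hlo, hhi⟩ := hℓ1 e he
    exact hc lam1 e (ℓ e) _ hK hlo hhi
  have hcf2 : ∀ e ∈ Eset, c lam2 e (xload lam2 e)
      = a e (ℓ e) * xload lam2 e + b e (ℓ e) + ge e * lam2 := by
    intro e he
    obtain ⟨hK, hlo, hhi⟩ := hℓ2 e he
    exact hc lam2 e (ℓ e) _ hK hlo hhi
  have hseg : ∀ e ∈ Eset, σ e (ℓ e) ≤ xm e ∧ (ℓ e < K → xm e < σ e (ℓ e + 1)) := by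
    intro e he
    obtain ⟨hK, hlo1, hhi1⟩ := hℓ1 e he
    obtain ⟨-, hlo2, hhi2⟩ := hℓ2 e he
    constructor
    · simp only [hxmdef]
      calc σ e (ℓ e) = (u + v) * σ e (ℓ e) := by rw [huv, one_mul]
        _ = u * σ e (ℓ e) + v * σ e (ℓ e) := by ring
        _ ≤ u * xload lam1 e + v * xload lam2 e :=
          add_le_add (mul_le_mul_of_nonneg_left hlo1 hu'.le)
            (mul_le_mul_of_nonneg_left hlo2 hv'.le)
    · intro hKlt
      have h1 := hhi1 hKlt
      have h2 := hhi2 hKlt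
      simp only [hxmdef]
      calc u * xload lam1 e + v * xload lam2 e
          < u * σ e (ℓ e + 1) + v * σ e (ℓ e + 1) :=
            add_lt_add ((mul_lt_mul_iff_right₀ hu').2 h1) ((mul_lt_mul_iff_right₀ hv').2 h2)
        _ = (u + v) * σ e (ℓ e + 1) := by ring
        _ = σ e (ℓ e + 1) := by rw [huv, one_mul]
  have hcfm : ∀ e ∈ Eset, c lam e (xm e) = a e (ℓ e) * xm e + b e (ℓ e) + ge e * lam := by
    intro e he
    exact hc lam e (ℓ e) _ (hℓ1 e he).1 (hseg e he).1 (hseg e he).2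
  have hinterp : ∀ e ∈ Eset,
      c lam e (xm e) = u * c lam1 e (xload lam1 e) + v * c lam2 e (xload lam2 e) := by
    intro e he
    rw [hcfm e he, hcf1 e he, hcf2 e he]
    simp only [hxmdef, hlamdef]
    linear_combination (-(b e (ℓ e))) * huv
  have hnn1 : ∀ e ∈ Eset, 0 ≤ c lam1 e (xload lam1 e) := by
    intro e he
    rw [hcf1 e he]
    have h1 := ha e (ℓ e) (hℓ1 e he).1
    have h2 := hb e (ℓ e) (hℓ1 e he).1
    have h3 := hge e
    nlinarith [hx1nn e]
  have hnn2 : ∀ e ∈ Eset, 0 ≤ c lam2 e (xload lam2 e) := by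
    intro e he
    rw [hcf2 e he]
    have h1 := ha e (ℓ e) (hℓ2 e he).1
    have h2 := hb e (ℓ e) (hℓ2 e he).1
    have h3 := hge e
    nlinarith [hx2nn e]
  have hnnm : ∀ e ∈ Eset, 0 ≤ c lam e (xm e) := by
    intro e he
    rw [hinterp e he]
    nlinarith [hnn1 e he, hnn2 e he, hu'.le, hv'.le]
  have hpathinterp : ∀ l : List V, l.Chain' (fun p' q' => (p', q') ∈ Eset) →
      pathCostOfLoads (c lam) xm l
        = u * pathCostOfLoads (c lam1) (xload lam1) l
          + v * pathCostOfLoads (c lam2) (xload lam2) l := by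
    intro l hch
    exact list_sum_interp u v _ _ _ (pathEdges l)
      (fun e he => hinterp e (pathEdges_mem_Eset hch e he))
  set y : ∀ i, {l : List V // IsPath Eset (s i) (t i) l} → ℝ :=
    fun i p => u * x1 i p + v * x2 i p with hydef
  have hym : edgeLoad y = xm := by
    funext e
    simp only [hydef]
    rw [edgeLoad_comb u v x1 x2 e, hfun1, hfun2]
  have hwy : IsWardrop d (c lam) y := by
    constructor
    · constructor
      · intro i p
        simp only [hydef]
        exact add_nonneg (mul_nonneg hu'.le (hw1.1.1 i p)) (mul_nonneg hv'.le (hw2.1.1 i p))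
      · intro i
        simp only [hydef]
        rw [Finset.sum_add_distrib, ← Finset.mul_sum, ← Finset.mul_sum, hw1.1.2 i, hw2.1.2 i]
        calc u * d i + v * d i = (u + v) * d i := by ring
          _ = d i := by rw [huv, one_mul]
    · intro i p hpos q
      have hpcy : ∀ l, pathCost (c lam) y l = pathCostOfLoads (c lam) xm l := by
        intro l
        show pathCostOfLoads (c lam) (edgeLoad y) l = _
        rw [hym]
      rw [hpcy, hpcy, hpathinterp p.1 p.2.2.2.2, hpathinterp q.1 q.2.2.2.2]
      have hy_pos : 0 < u * x1 i p + v * x2 i p := hpos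
      have hcase : 0 < x1 i p ∨ 0 < x2 i p := by
        by_contra hno
        push_neg at hno
        have e1 : x1 i p = 0 := le_antisymm hno.1 (hw1.1.1 i p)
        have e2 : x2 i p = 0 := le_antisymm hno.2 (hw2.1.1 i p)
        rw [e1, e2] at hy_pos
        simp at hy_pos
      have hkey : pathCostOfLoads (c lam1) (xload lam1) p.1 ≤ pathCostOfLoads (c lam1) (xload lam1) q.1
          ∧ pathCostOfLoads (c lam2) (xload lam2) p.1 ≤ pathCostOfLoads (c lam2) (xload lam2) q.1 := by
        rcases hcase with hc1 | hc2
        · exact ⟨used_path_shortest_other hnn1 hnn1 rfl hw1 hfun1 i p hc1 q,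
            used_path_shortest_other hnn1 hnn2 (hS1.trans hS2.symm) hw1 hfun1 i p hc1 q⟩
        · exact ⟨used_path_shortest_other hnn2 hnn1 (hS2.trans hS1.symm) hw2 hfun2 i p hc2 q,
            used_path_shortest_other hnn2 hnn2 rfl hw2 hfun2 i p hc2 q⟩
      exact add_le_add (mul_le_mul_of_nonneg_left hkey.1 hu'.le)
        (mul_le_mul_of_nonneg_left hkey.2 hv'.le)
  have hloadm : ∀ e, xload lam e = xm e := by
    intro e
    have h := wardrop_loads_unique hd (c lam) (hcmono lam) hwy hwstar e
    calc xload lam e = edgeLoad xstar e := (hloadstar e).symm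
      _ = edgeLoad y e := h.symm
      _ = xm e := by rw [hym]
  have hfunm : xload lam = xm := funext hloadm
  refine ⟨hlamnn, ?_, ?_⟩
  · -- activeSupport equality
    rw [hfunm]
    ext ⟨i, ev, ew⟩
    have hInterp : ∀ z : V, shortestDist Eset (c lam1) (xload lam1) (s i) z ≠ ⊤ →
        ∃ r1 r2 : ℝ,
          shortestDist Eset (c lam1) (xload lam1) (s i) z = ((r1 : ℝ) : EReal) ∧
          shortestDist Eset (c lam2) (xload lam2) (s i) z = ((r2 : ℝ) : EReal) ∧
          shortestDist Eset (c lam) xm (s i) z = ((u * r1 + v * r2 : ℝ) : EReal) := by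
      intro z hz
      obtain ⟨l, hl, hval1⟩ := shortestDist_exists hz
      have htight1 := edges_tight hnn1 (s i) l z hl hval1
      have htight2 : ∀ e' ∈ pathEdges l,
          ((c lam2 e' (xload lam2 e') : ℝ) : EReal)
            = shortestDist Eset (c lam2) (xload lam2) (s i) e'.2
              - shortestDist Eset (c lam2) (xload lam2) (s i) e'.1 := by
        intro e' he'
        have hmem : (i, e') ∈ activeSupport Eset s (c lam1) (xload lam1) :=
          ⟨pathEdges_mem_Eset hl.2.2.2 e' he', htight1 e' he'⟩
        rw [hS1, ← hS2] at hmem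
        exact hmem.2
      have hval2 := cost_eq_dist_of_tight hnn2 (s i) l z hl htight2
      refine ⟨_, _, hval1, hval2.symm, ?_⟩
      have hcm := hpathinterp l hl.2.2.2
      apply le_antisymm
      · have hle := shortestDist_le (cc := c lam) (load := xm) hl
        rw [hcm] at hle
        exact hle
      · apply le_sInf
        rintro r ⟨l', hl', rfl⟩
        rw [hpathinterp l' hl'.2.2.2]
        have h1 : pathCostOfLoads (c lam1) (xload lam1) l
            ≤ pathCostOfLoads (c lam1) (xload lam1) l' := by
          have hh := shortestDist_le (cc := c lam1) (load := xload lam1) hl'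
          rw [hval1] at hh
          exact_mod_cast hh
        have h2 : pathCostOfLoads (c lam2) (xload lam2) l
            ≤ pathCostOfLoads (c lam2) (xload lam2) l' := by
          have hh := shortestDist_le (cc := c lam2) (load := xload lam2) hl'
          rw [← hval2] at hh
          exact_mod_cast hh
        have hfin : u * pathCostOfLoads (c lam1) (xload lam1) l
              + v * pathCostOfLoads (c lam2) (xload lam2) l
            ≤ u * pathCostOfLoads (c lam1) (xload lam1) l'
              + v * pathCostOfLoads (c lam2) (xload lam2) l' :=
          add_le_add (mul_le_mul_of_nonneg_left h1 hu'.le)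
            (mul_le_mul_of_nonneg_left h2 hv'.le)
        exact_mod_cast hfin
    constructor
    · rintro ⟨he, htm⟩
      obtain ⟨rv, rw', hvmv, hvmw, hcm'⟩ := EReal_sub_real
        (shortestDist_nonneg hnnm (s i) ev) (shortestDist_nonneg hnnm (s i) ew) htm
      have h1v : shortestDist Eset (c lam1) (xload lam1) (s i) ev ≠ ⊤ := by
        have hne : shortestDist Eset (c lam) xm (s i) ev ≠ ⊤ := by rw [hvmv]; simp
        obtain ⟨l, hl, -⟩ := shortestDist_exists hne
        exact shortestDist_ne_top_of_path hl
      have h1w : shortestDist Eset (c lam1) (xload lam1) (s i) ew ≠ ⊤ := by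
        have hne : shortestDist Eset (c lam) xm (s i) ew ≠ ⊤ := by rw [hvmw]; simp
        obtain ⟨l, hl, -⟩ := shortestDist_exists hne
        exact shortestDist_ne_top_of_path hl
      obtain ⟨r1v, r2v, hφ1v, hφ2v, hφmv⟩ := hInterp ev h1v
      obtain ⟨r1w, r2w, hφ1w, hφ2w, hφmw⟩ := hInterp ew h1w
      have hrv : rv = u * r1v + v * r2v := by
        rw [hvmv] at hφmv
        exact_mod_cast hφmv
      have hrw : rw' = u * r1w + v * r2w := by
        rw [hvmw] at hφmw
        exact_mod_cast hφmw
      have htri1 : r1w ≤ r1v + c lam1 (ev, ew) (xload lam1 (ev, ew)) := by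
        have hh := shortestDist_triangle hnn1 (av := s i) he
        rw [hφ1v, hφ1w, ← EReal.coe_add] at hh
        exact_mod_cast hh
      have htri2 : r2w ≤ r2v + c lam2 (ev, ew) (xload lam2 (ev, ew)) := by
        have hh := shortestDist_triangle hnn2 (av := s i) he
        rw [hφ2v, hφ2w, ← EReal.coe_add] at hh
        exact_mod_cast hh
      have heq : u * c lam1 (ev, ew) (xload lam1 (ev, ew)) + v * c lam2 (ev, ew) (xload lam2 (ev, ew))
          = u * (r1w - r1v) + v * (r2w - r2v) := by
        rw [← hinterp _ he, hcm', hrv, hrw]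
        ring
      have hA1 : c lam1 (ev, ew) (xload lam1 (ev, ew)) = r1w - r1v := by nlinarith
      have hmem1 : (i, (ev, ew)) ∈ activeSupport Eset s (c lam1) (xload lam1) := by
        refine ⟨he, ?_⟩
        rw [hφ1v, hφ1w, ← EReal.coe_sub]
        exact EReal.coe_eq_coe_iff.2 hA1
      rw [hS1] at hmem1
      exact hmem1
    · intro hmemS
      have hm1 : (i, (ev, ew)) ∈ activeSupport Eset s (c lam1) (xload lam1) := by
        rw [hS1]; exact hmemS
      have hm2 : (i, (ev, ew)) ∈ activeSupport Eset s (c lam2) (xload lam2) := by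
        rw [hS2]; exact hmemS
      obtain ⟨he, ht1⟩ := hm1
      obtain ⟨-, ht2⟩ := hm2
      obtain ⟨r1v, r1w, hφ1v, hφ1w, hc1eq⟩ := EReal_sub_real
        (shortestDist_nonneg hnn1 (s i) ev) (shortestDist_nonneg hnn1 (s i) ew) ht1
      obtain ⟨r2v, r2w, hφ2v, hφ2w, hc2eq⟩ := EReal_sub_real
        (shortestDist_nonneg hnn2 (s i) ev) (shortestDist_nonneg hnn2 (s i) ew) ht2
      have h1v : shortestDist Eset (c lam1) (xload lam1) (s i) ev ≠ ⊤ := by rw [hφ1v]; simp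
      have h1w : shortestDist Eset (c lam1) (xload lam1) (s i) ew ≠ ⊤ := by rw [hφ1w]; simp
      obtain ⟨r1v', r2v', hφ1v', hφ2v', hφmv⟩ := hInterp ev h1v
      obtain ⟨r1w', r2w', hφ1w', hφ2w', hφmw⟩ := hInterp ew h1w
      have e1v : r1v' = r1v := by rw [hφ1v] at hφ1v'; exact_mod_cast Eq.symm hφ1v'
      have e2v : r2v' = r2v := by rw [hφ2v] at hφ2v'; exact_mod_cast Eq.symm hφ2v'
      have e1w : r1w' = r1w := by rw [hφ1w] at hφ1w'; exact_mod_cast Eq.symm hφ1w'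
      have e2w : r2w' = r2w := by rw [hφ2w] at hφ2w'; exact_mod_cast Eq.symm hφ2w'
      refine ⟨he, ?_⟩
      rw [hφmv, hφmw, ← EReal.coe_sub, hinterp _ he]
      refine EReal.coe_eq_coe_iff.2 ?_
      rw [hc1eq, hc2eq, e1v, e2v, e1w, e2w]
      ring
  · intro e he
    refine ⟨(hℓ1 e he).1, ?_, ?_⟩
    · rw [hfunm]; exact (hseg e he).1
    · intro hK; rw [hfunm]; exact (hseg e he).2 hK
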